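/- Let Z = [U; V] and Z' = [U'; V'] in R^{(n1+n2)×r}, and let d_P(Z', Z) = min{‖Z' − ZP‖_F : P ∈ R^{r×r} orthogonal} be the Procrustes distance. Set a = (√2 · max{σ₁(U), σ₁(V)} · d_P(Z', Z) + (1/2)·d_P(Z', Z)²). Then ‖U'ᵀU' − V'ᵀV'‖_F ≤ ‖UᵀU − VᵀV‖_F + 2a, and ‖U'V'ᵀ − UVᵀ‖_F ≤ a. -/

import Mathlib

open Matrix

noncomputable def opNorm {m n : Type*} [Fintype m] [Fintype n] [DecidableEq n]
    (A : Matrix m n ℝ) : ℝ :=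
  ‖LinearMap.toContinuousLinearMap (Matrix.toEuclideanLin A)‖

noncomputable def frob {m n : Type*} [Fintype m] [Fintype n] (A : Matrix m n ℝ) : ℝ :=
  Real.sqrt (∑ i, ∑ j, (A i j) ^ 2)

noncomputable def frobS {n1 n2 : ℕ} (S : Finset (Fin n1 × Fin n2))
    (A : Matrix (Fin n1) (Fin n2) ℝ) : ℝ :=
  Real.sqrt (∑ p ∈ S, (A p.1 p.2) ^ 2)

noncomputable def dP {m : Type*} [Fintype m] {r : ℕ}
    (Z Z' : Matrix m (Fin r) ℝ) : ℝ :=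
  sInf { d | ∃ P : Matrix (Fin r) (Fin r) ℝ, Pᵀ * P = 1 ∧ d = frob (Z - Z' * P) }

/-! ### Auxiliary lemmas about the Frobenius norm -/

section BasicFrob
variable {m n l : Type*} [Fintype m] [Fintype n] [Fintype l]

lemma frob_nonneg (A : Matrix m n ℝ) : 0 ≤ frob A := Real.sqrt_nonneg _

lemma frob_sq (A : Matrix m n ℝ) : frob A ^ 2 = ∑ i, ∑ j, (A i j) ^ 2 := by
  rw [frob, Real.sq_sqrt]; positivity

lemma frob_transpose (A : Matrix m n ℝ) : frob Aᵀ = frob A := by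
  rw [frob, frob, Finset.sum_comm]
  simp [Matrix.transpose_apply]

lemma frob_euclid (A : Matrix m n ℝ) :
    frob A = ‖(WithLp.equiv 2 (m × n → ℝ)).symm (fun p => A p.1 p.2)‖ := by
  rw [EuclideanSpace.norm_eq, frob]
  congr 1
  rw [Fintype.sum_prod_type]
  simp [sq_abs]

lemma frob_add_le (A B : Matrix m n ℝ) : frob (A + B) ≤ frob A + frob B := by
  rw [frob_euclid, frob_euclid, frob_euclid]
  have h : (WithLp.equiv 2 (m × n → ℝ)).symm (fun p => (A + B) p.1 p.2)
      = (WithLp.equiv 2 (m × n → ℝ)).symm (fun p => A p.1 p.2)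
        + (WithLp.equiv 2 (m × n → ℝ)).symm (fun p => B p.1 p.2) := rfl
  rw [h]
  exact norm_add_le _ _

lemma frob_neg (A : Matrix m n ℝ) : frob (-A) = frob A := by
  rw [frob, frob]; simp

lemma frob_sub_le (A B : Matrix m n ℝ) : frob (A - B) ≤ frob A + frob B := by
  rw [sub_eq_add_neg]
  simpa [frob_neg] using frob_add_le A (-B)

lemma frob_eq_of_sq_eq {m' n' : Type*} [Fintype m'] [Fintype n']
    {A : Matrix m n ℝ} {B : Matrix m' n' ℝ}
    (h : frob A ^ 2 = frob B ^ 2) : frob A = frob B := by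
  have := congrArg Real.sqrt h
  rwa [Real.sqrt_sq (frob_nonneg A), Real.sqrt_sq (frob_nonneg B)] at this

lemma frob_sq_trace (A : Matrix m n ℝ) : frob A ^ 2 = Matrix.trace (Aᵀ * A) := by
  rw [frob_sq, Matrix.trace]
  simp only [Matrix.diag_apply, Matrix.mul_apply, Matrix.transpose_apply, sq]
  exact Finset.sum_comm

lemma frob_sq_trace' (A : Matrix m n ℝ) : frob A ^ 2 = Matrix.trace (A * Aᵀ) := by
  rw [frob_sq, Matrix.trace]
  simp only [Matrix.diag_apply, Matrix.mul_apply, Matrix.transpose_apply, sq]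

lemma frob_mul_orth [DecidableEq n] (A : Matrix m n ℝ) {P : Matrix n n ℝ} (hP : P * Pᵀ = 1) :
    frob (A * P) = frob A := by
  apply frob_eq_of_sq_eq
  rw [frob_sq_trace', frob_sq_trace', Matrix.transpose_mul, Matrix.mul_assoc,
    ← Matrix.mul_assoc P, hP, Matrix.one_mul]

lemma frob_orth_mul [DecidableEq m] (A : Matrix m n ℝ) {Q : Matrix m m ℝ} (hQ : Qᵀ * Q = 1) :
    frob (Q * A) = frob A := by
  apply frob_eq_of_sq_eq
  rw [frob_sq_trace, frob_sq_trace, Matrix.transpose_mul, Matrix.mul_assoc,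
    ← Matrix.mul_assoc Qᵀ, hQ, Matrix.one_mul]

lemma frob_mul_frob (A : Matrix m n ℝ) (B : Matrix n l ℝ) :
    frob (A * B) ≤ frob A * frob B := by
  have h1 : frob (A * B) ^ 2 ≤ (frob A * frob B) ^ 2 := by
    rw [frob_sq, mul_pow, frob_sq, frob_sq]
    rw [show (∑ i : n, ∑ j : l, (B i j) ^ 2) = ∑ j : l, ∑ i : n, (B i j) ^ 2 from
      Finset.sum_comm]
    rw [Finset.sum_mul_sum]
    refine Finset.sum_le_sum fun i _ => Finset.sum_le_sum fun j _ => ?_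
    rw [Matrix.mul_apply]
    exact Finset.sum_mul_sq_le_sq_mul_sq _ _ _
  calc frob (A * B) = Real.sqrt (frob (A * B) ^ 2) := (Real.sqrt_sq (frob_nonneg _)).symm
    _ ≤ Real.sqrt ((frob A * frob B) ^ 2) := Real.sqrt_le_sqrt h1
    _ = frob A * frob B := Real.sqrt_sq (mul_nonneg (frob_nonneg A) (frob_nonneg B))

end BasicFrob

section Op
open scoped Matrix.Norms.L2Operator
variable {m n l : Type*} [Fintype m] [Fintype n] [Fintype l]

lemma opNorm_nonneg [DecidableEq n] (A : Matrix m n ℝ) : 0 ≤ opNorm A := norm_nonneg _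

lemma opNorm_transpose [DecidableEq m] [DecidableEq n] (A : Matrix m n ℝ) :
    opNorm Aᵀ = opNorm A := by
  show ‖Aᵀ‖ = ‖A‖
  rw [← Matrix.conjTranspose_eq_transpose_of_trivial, Matrix.l2_opNorm_conjTranspose]

lemma sqrt_sum_sq_mulVec_le [DecidableEq n] (A : Matrix m n ℝ) (x : n → ℝ) :
    Real.sqrt (∑ i, (A.mulVec x i) ^ 2) ≤ opNorm A * Real.sqrt (∑ k, (x k) ^ 2) := by
  have h := Matrix.l2_opNorm_mulVec A ((WithLp.equiv 2 (n → ℝ)).symm x)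
  rw [EuclideanSpace.norm_eq, EuclideanSpace.norm_eq] at h
  show _ ≤ ‖A‖ * _
  simpa [sq_abs] using h

end Op

section Mixed
variable {m n l : Type*} [Fintype m] [Fintype n] [Fintype l]

lemma frob_mul_le [DecidableEq n] (A : Matrix m n ℝ) (B : Matrix n l ℝ) :
    frob (A * B) ≤ opNorm A * frob B := by
  have hcol : ∀ j, ∑ i, ((A * B) i j) ^ 2 ≤ opNorm A ^ 2 * ∑ k, (B k j) ^ 2 := by
    intro j
    have h := sqrt_sum_sq_mulVec_le A (fun k => B k j)
    have h2 : ∀ i, A.mulVec (fun k => B k j) i = (A * B) i j := by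
      intro i; rw [Matrix.mulVec, Matrix.mul_apply]; rfl
    simp only [h2] at h
    have h3 := pow_le_pow_left₀ (Real.sqrt_nonneg _) h 2
    rw [Real.sq_sqrt (by positivity), mul_pow, Real.sq_sqrt (by positivity)] at h3
    exact h3
  have hsum : frob (A * B) ^ 2 ≤ (opNorm A * frob B) ^ 2 := by
    rw [frob_sq, mul_pow, frob_sq, Finset.sum_comm,
      show (∑ i : n, ∑ j : l, (B i j) ^ 2) = ∑ j : l, ∑ i : n, (B i j) ^ 2 from
        Finset.sum_comm, Finset.mul_sum]
    exact Finset.sum_le_sum fun j _ => hcol j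
  calc frob (A * B) = Real.sqrt (frob (A * B) ^ 2) := (Real.sqrt_sq (frob_nonneg _)).symm
    _ ≤ Real.sqrt ((opNorm A * frob B) ^ 2) := Real.sqrt_le_sqrt hsum
    _ = opNorm A * frob B := Real.sqrt_sq (mul_nonneg (opNorm_nonneg A) (frob_nonneg B))

lemma frob_mul_le' [DecidableEq m] [DecidableEq n] (B : Matrix l n ℝ) (A : Matrix n m ℝ) :
    frob (B * A) ≤ frob B * opNorm A := by
  calc frob (B * A) = frob ((B * A)ᵀ) := (frob_transpose _).symm
    _ = frob (Aᵀ * Bᵀ) := by rw [Matrix.transpose_mul]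
    _ ≤ opNorm Aᵀ * frob Bᵀ := frob_mul_le _ _
    _ = frob B * opNorm A := by rw [opNorm_transpose, frob_transpose]; ring

end Mixed

section FromRows
variable {m l n : Type*} [Fintype m] [Fintype l] [Fintype n]

lemma fromRows_sub (A₁ B₁ : Matrix m n ℝ) (A₂ B₂ : Matrix l n ℝ) :
    fromRows A₁ A₂ - fromRows B₁ B₂ = fromRows (A₁ - B₁) (A₂ - B₂) := by
  ext i j
  cases i <;> simp [Matrix.fromRows_apply_inl, Matrix.fromRows_apply_inr, Matrix.sub_apply]

lemma frob_fromRows_sq (X : Matrix m n ℝ) (Y : Matrix l n ℝ) :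
    frob (fromRows X Y) ^ 2 = frob X ^ 2 + frob Y ^ 2 := by
  rw [frob_sq, frob_sq, frob_sq, Fintype.sum_sum_type]
  rfl

end FromRows

/-- Monotone limit argument to pass a bound valid on a set of nonnegative reals
to its infimum. -/
lemma csInf_bound {S : Set ℝ} (hne : S.Nonempty) (hpos : ∀ d ∈ S, 0 ≤ d)
    {L base c q : ℝ} (hc : 0 ≤ c) (hq : 0 ≤ q)
    (h : ∀ d ∈ S, L ≤ base + (c * d + q * d ^ 2)) :
    L ≤ base + (c * sInf S + q * sInf S ^ 2) := by
  have hD0 : 0 ≤ sInf S := Real.sInf_nonneg hpos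
  set D := sInf S with hD
  refine le_of_forall_pos_le_add fun ε hε => ?_
  set K := c + 2 * q * D + q + 1 with hK
  have hK0 : 0 < K := by nlinarith [mul_nonneg hq hD0]
  set δ := min 1 (ε / K) with hδ
  have hδ0 : 0 < δ := lt_min one_pos (div_pos hε hK0)
  have hδ1 : δ ≤ 1 := min_le_left _ _
  have hδK : δ * K ≤ ε := by
    have h1 : δ ≤ ε / K := min_le_right _ _
    calc δ * K ≤ (ε / K) * K := mul_le_mul_of_nonneg_right h1 hK0.le
      _ = ε := div_mul_cancel₀ _ hK0.ne'
  obtain ⟨d, hdS, hdlt⟩ := Real.lt_sInf_add_pos hne hδ0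
  have hd0 := hpos d hdS
  have hb := h d hdS
  have hdle : d ≤ D + δ := hdlt.le
  have hsq : d ^ 2 ≤ (D + δ) ^ 2 := by nlinarith
  have hδsq : δ ^ 2 ≤ δ := by nlinarith
  nlinarith [mul_le_mul_of_nonneg_left hdle hc, mul_le_mul_of_nonneg_left hsq hq,
    mul_le_mul_of_nonneg_left hδsq hq]

set_option maxHeartbeats 1000000 in
/-- The key per-rotation bound. -/
lemma key_bounds {n1 n2 r : ℕ} (U U' : Matrix (Fin n1) (Fin r) ℝ)
    (V V' : Matrix (Fin n2) (Fin r) ℝ)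
    (P : Matrix (Fin r) (Fin r) ℝ) (hP : Pᵀ * P = 1) :
    frob (U'ᵀ * U' - V'ᵀ * V') ≤ frob (Uᵀ * U - Vᵀ * V) +
      (2 * (Real.sqrt 2 * max (opNorm U) (opNorm V)) *
          frob (fromRows U' V' - fromRows U V * P)
        + 1 * frob (fromRows U' V' - fromRows U V * P) ^ 2) ∧
    frob (U' * V'ᵀ - U * Vᵀ) ≤
      Real.sqrt 2 * max (opNorm U) (opNorm V) *
          frob (fromRows U' V' - fromRows U V * P)
        + (1 / 2) * frob (fromRows U' V' - fromRows U V * P) ^ 2 := by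
  have hP' : P * Pᵀ = 1 := mul_eq_one_comm.mp hP
  set DU := U' - U * P with hDU
  set DV := V' - V * P with hDV
  have hfr : fromRows U' V' - fromRows U V * P = fromRows DU DV := by
    rw [Matrix.fromRows_mul, fromRows_sub]
  set d := frob (fromRows U' V' - fromRows U V * P) with hd
  have hd2 : frob DU ^ 2 + frob DV ^ 2 = d ^ 2 := by
    rw [hd, hfr, frob_fromRows_sq]
  have hdU0 := frob_nonneg DU
  have hdV0 := frob_nonneg DV
  have hd0 : 0 ≤ d := frob_nonneg _
  set M := max (opNorm U) (opNorm V) with hM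
  have hMU : opNorm U ≤ M := le_max_left _ _
  have hMV : opNorm V ≤ M := le_max_right _ _
  have hM0 : 0 ≤ M := le_trans (opNorm_nonneg U) hMU
  have hsqrt2 : Real.sqrt 2 ^ 2 = 2 := Real.sq_sqrt (by norm_num)
  have hsqrt2' : 0 ≤ Real.sqrt 2 := Real.sqrt_nonneg 2
  have hsum : frob DU + frob DV ≤ Real.sqrt 2 * d := by
    have h2 : (frob DU + frob DV) ^ 2 ≤ (Real.sqrt 2 * d) ^ 2 := by
      nlinarith [sq_nonneg (frob DU - frob DV)]
    calc frob DU + frob DV = Real.sqrt ((frob DU + frob DV) ^ 2) :=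
          (Real.sqrt_sq (by positivity)).symm
      _ ≤ Real.sqrt ((Real.sqrt 2 * d) ^ 2) := Real.sqrt_le_sqrt h2
      _ = Real.sqrt 2 * d := Real.sqrt_sq (by positivity)
  have hU' : U' = U * P + DU := by rw [hDU]; abel
  have hV' : V' = V * P + DV := by rw [hDV]; abel
  constructor
  · -- balance bound
    have hE1 : U'ᵀ * U' - V'ᵀ * V'
        = Pᵀ * ((Uᵀ * U - Vᵀ * V) * P)
          + (Pᵀ * (Uᵀ * DU) + DUᵀ * (U * P) + DUᵀ * DU)
          - (Pᵀ * (Vᵀ * DV) + DVᵀ * (V * P) + DVᵀ * DV) := by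
      rw [hU', hV']
      simp only [Matrix.transpose_add, Matrix.transpose_mul, Matrix.add_mul, Matrix.mul_add,
        Matrix.mul_sub, Matrix.sub_mul, Matrix.mul_assoc]
      abel
    have t0 : frob (Pᵀ * ((Uᵀ * U - Vᵀ * V) * P)) = frob (Uᵀ * U - Vᵀ * V) := by
      rw [frob_orth_mul _ (by rw [Matrix.transpose_transpose]; exact hP'),
        frob_mul_orth _ hP']
    have t1 : frob (Pᵀ * (Uᵀ * DU)) ≤ opNorm U * frob DU := by
      rw [frob_orth_mul _ (by rw [Matrix.transpose_transpose]; exact hP')]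
      calc frob (Uᵀ * DU) ≤ opNorm Uᵀ * frob DU := frob_mul_le _ _
        _ = opNorm U * frob DU := by rw [opNorm_transpose]
    have t2 : frob (DUᵀ * (U * P)) ≤ frob DU * opNorm U := by
      rw [← Matrix.mul_assoc]
      calc frob (DUᵀ * U * P) = frob (DUᵀ * U) := frob_mul_orth _ hP'
        _ ≤ frob DUᵀ * opNorm U := frob_mul_le' _ _
        _ = frob DU * opNorm U := by rw [frob_transpose]
    have t3 : frob (DUᵀ * DU) ≤ frob DU * frob DU := by
      calc frob (DUᵀ * DU) ≤ frob DUᵀ * frob DU := frob_mul_frob _ _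
        _ = frob DU * frob DU := by rw [frob_transpose]
    have s1 : frob (Pᵀ * (Vᵀ * DV)) ≤ opNorm V * frob DV := by
      rw [frob_orth_mul _ (by rw [Matrix.transpose_transpose]; exact hP')]
      calc frob (Vᵀ * DV) ≤ opNorm Vᵀ * frob DV := frob_mul_le _ _
        _ = opNorm V * frob DV := by rw [opNorm_transpose]
    have s2 : frob (DVᵀ * (V * P)) ≤ frob DV * opNorm V := by
      rw [← Matrix.mul_assoc]
      calc frob (DVᵀ * V * P) = frob (DVᵀ * V) := frob_mul_orth _ hP'
        _ ≤ frob DVᵀ * opNorm V := frob_mul_le' _ _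
        _ = frob DV * opNorm V := by rw [frob_transpose]
    have s3 : frob (DVᵀ * DV) ≤ frob DV * frob DV := by
      calc frob (DVᵀ * DV) ≤ frob DVᵀ * frob DV := frob_mul_frob _ _
        _ = frob DV * frob DV := by rw [frob_transpose]
    have trA : frob (Pᵀ * (Uᵀ * DU) + DUᵀ * (U * P) + DUᵀ * DU)
        ≤ frob (Pᵀ * (Uᵀ * DU)) + frob (DUᵀ * (U * P)) + frob (DUᵀ * DU) :=
      le_trans (frob_add_le _ _) (add_le_add_left (frob_add_le _ _) _)
    have trB : frob (Pᵀ * (Vᵀ * DV) + DVᵀ * (V * P) + DVᵀ * DV)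
        ≤ frob (Pᵀ * (Vᵀ * DV)) + frob (DVᵀ * (V * P)) + frob (DVᵀ * DV) :=
      le_trans (frob_add_le _ _) (add_le_add_left (frob_add_le _ _) _)
    have tri : frob (U'ᵀ * U' - V'ᵀ * V')
        ≤ frob (Pᵀ * ((Uᵀ * U - Vᵀ * V) * P))
          + (frob (Pᵀ * (Uᵀ * DU)) + frob (DUᵀ * (U * P)) + frob (DUᵀ * DU))
          + (frob (Pᵀ * (Vᵀ * DV)) + frob (DVᵀ * (V * P)) + frob (DVᵀ * DV)) := by
      rw [hE1]
      refine le_trans (frob_sub_le _ _) ?_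
      exact add_le_add (le_trans (frob_add_le _ _) (add_le_add_right trA _)) trB
    rw [t0] at tri
    refine le_trans tri ?_
    have step : frob (Pᵀ * (Uᵀ * DU)) + frob (DUᵀ * (U * P)) + frob (DUᵀ * DU)
          ≤ opNorm U * frob DU + frob DU * opNorm U + frob DU * frob DU :=
      add_le_add (add_le_add t1 t2) t3
    have step' : frob (Pᵀ * (Vᵀ * DV)) + frob (DVᵀ * (V * P)) + frob (DVᵀ * DV)
          ≤ opNorm V * frob DV + frob DV * opNorm V + frob DV * frob DV :=
      add_le_add (add_le_add s1 s2) s3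
    have hMsum : M * (frob DU + frob DV) ≤ M * (Real.sqrt 2 * d) :=
      mul_le_mul_of_nonneg_left hsum hM0
    have e1 : opNorm U * frob DU ≤ M * frob DU :=
      mul_le_mul_of_nonneg_right hMU hdU0
    have e2 : opNorm V * frob DV ≤ M * frob DV :=
      mul_le_mul_of_nonneg_right hMV hdV0
    nlinarith [step, step']
  · -- distance bound
    have hE2 : U' * V'ᵀ - U * Vᵀ
        = U * (P * DVᵀ) + DU * (Pᵀ * Vᵀ) + DU * DVᵀ := by
      rw [hU', hV']
      simp only [Matrix.transpose_add, Matrix.transpose_mul, Matrix.add_mul, Matrix.mul_add,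
        Matrix.mul_assoc]
      rw [show P * (Pᵀ * Vᵀ) = Vᵀ by rw [← Matrix.mul_assoc, hP', Matrix.one_mul]]
      abel
    have t1 : frob (U * (P * DVᵀ)) ≤ opNorm U * frob DV := by
      calc frob (U * (P * DVᵀ)) ≤ opNorm U * frob (P * DVᵀ) := frob_mul_le _ _
        _ = opNorm U * frob DVᵀ := by rw [frob_orth_mul _ hP]
        _ = opNorm U * frob DV := by rw [frob_transpose]
    have t2 : frob (DU * (Pᵀ * Vᵀ)) ≤ frob DU * opNorm V := by
      rw [← Matrix.mul_assoc]
      calc frob (DU * Pᵀ * Vᵀ) ≤ frob (DU * Pᵀ) * opNorm Vᵀ := frob_mul_le' _ _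
        _ = frob DU * opNorm V := by
            rw [frob_mul_orth _ (by rw [Matrix.transpose_transpose]; exact hP),
              opNorm_transpose]
    have t3 : frob (DU * DVᵀ) ≤ frob DU * frob DV := by
      calc frob (DU * DVᵀ) ≤ frob DU * frob DVᵀ := frob_mul_frob _ _
        _ = frob DU * frob DV := by rw [frob_transpose]
    have tri : frob (U' * V'ᵀ - U * Vᵀ)
        ≤ frob (U * (P * DVᵀ)) + frob (DU * (Pᵀ * Vᵀ)) + frob (DU * DVᵀ) := by
      rw [hE2]
      exact le_trans (frob_add_le _ _) (add_le_add_left (frob_add_le _ _) _)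
    refine le_trans tri ?_
    have step : frob (U * (P * DVᵀ)) + frob (DU * (Pᵀ * Vᵀ)) + frob (DU * DVᵀ)
        ≤ opNorm U * frob DV + frob DU * opNorm V + frob DU * frob DV :=
      add_le_add (add_le_add t1 t2) t3
    have hMsum : M * (frob DU + frob DV) ≤ M * (Real.sqrt 2 * d) :=
      mul_le_mul_of_nonneg_left hsum hM0
    have e1 : opNorm U * frob DV ≤ M * frob DV := mul_le_mul_of_nonneg_right hMU hdV0
    have e2 : opNorm V * frob DU ≤ M * frob DU := mul_le_mul_of_nonneg_right hMV hdU0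
    nlinarith [sq_nonneg (frob DU - frob DV), step]

theorem update_balance_distance_bounds {n1 n2 r : ℕ}
    (U U' : Matrix (Fin n1) (Fin r) ℝ) (V V' : Matrix (Fin n2) (Fin r) ℝ) :
    let Z := Matrix.fromRows U V
    let Z' := Matrix.fromRows U' V'
    let a := Real.sqrt 2 * max (opNorm U) (opNorm V) * dP Z' Z +
      (1 / 2) * (dP Z' Z) ^ 2
    frob (U'ᵀ * U' - V'ᵀ * V') ≤ frob (Uᵀ * U - Vᵀ * V) + 2 * a ∧
      frob (U' * V'ᵀ - U * Vᵀ) ≤ a := by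
  intro Z Z' a
  set M := max (opNorm U) (opNorm V) with hM
  have hM0 : 0 ≤ M := le_trans (opNorm_nonneg U) (le_max_left _ _)
  have hsqrt2' : 0 ≤ Real.sqrt 2 := Real.sqrt_nonneg 2
  set S : Set ℝ :=
    { d | ∃ P : Matrix (Fin r) (Fin r) ℝ, Pᵀ * P = 1 ∧ d = frob (Z' - Z * P) } with hS
  have hdP : dP Z' Z = sInf S := rfl
  have hne : S.Nonempty := ⟨frob (Z' - Z), 1, by simp, by simp⟩
  have hpos : ∀ d ∈ S, 0 ≤ d := by
    rintro d ⟨P, hP, rfl⟩; exact frob_nonneg _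
  constructor
  · have h := csInf_bound hne hpos (L := frob (U'ᵀ * U' - V'ᵀ * V'))
      (base := frob (Uᵀ * U - Vᵀ * V)) (c := 2 * (Real.sqrt 2 * M)) (q := 1)
      (by positivity) (by norm_num) ?_
    · rw [← hdP] at h
      have e : frob (Uᵀ * U - Vᵀ * V) +
            (2 * (Real.sqrt 2 * M) * dP Z' Z + 1 * dP Z' Z ^ 2)
          = frob (Uᵀ * U - Vᵀ * V) +
            2 * (Real.sqrt 2 * M * dP Z' Z + (1 / 2) * (dP Z' Z) ^ 2) := by ring
      rw [e] at h
      exact h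
    · rintro d ⟨P, hP, rfl⟩
      exact (key_bounds U U' V V' P hP).1
  · have h := csInf_bound hne hpos (L := frob (U' * V'ᵀ - U * Vᵀ))
      (base := 0) (c := Real.sqrt 2 * M) (q := 1 / 2)
      (by positivity) (by norm_num) ?_
    · rw [← hdP] at h
      have e : (0 : ℝ) + (Real.sqrt 2 * M * dP Z' Z + 1 / 2 * dP Z' Z ^ 2)
          = Real.sqrt 2 * M * dP Z' Z + (1 / 2) * (dP Z' Z) ^ 2 := by ring
      rw [e] at h
      exact h
    · rintro d ⟨P, hP, rfl⟩
      have hk := (key_bounds U U' V V' P hP).2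
      have e : Real.sqrt 2 * M * frob (Z' - Z * P) + (1 / 2) * frob (Z' - Z * P) ^ 2
          = 0 + (Real.sqrt 2 * M * frob (Z' - Z * P) + 1 / 2 * frob (Z' - Z * P) ^ 2) := by
        ring
      rw [e] at hk
      exact hk
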